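/- Dissipative energy inequality for the multilayer shallow model (main Theorem). Let N ≥ 1, and let ρ, g > 0 be constants. Let h_1,…,h_N > 0, u_1,…,u_N : ℝ×ℝ² → ℝ², p_S, z_b : ℝ×ℝ² → ℝ, G_{α+1/2} : ℝ×ℝ² → ℝ for α = 0,…,N, η_{α+1/2} ≥ 0 for α = 1,…,N, μ ≥ 0, and h_{α+1/2} > 0 for α = 1,…,N−1 be continuously differentiable functions of (t,x). Set h := Σ_{α=1}^N h_α, u_0 := 0, u_{N+1} := 0, h_{N+1/2} := h_N, assume G_{N+1/2} = 0 and u_1(t,x) ≠ 0 at every point, and define K_{1/2} := −μ ρ g h u_1/|u_1| and K_{α+1/2} := −η_{α+1/2}(u_{α+1} − u_α)/h_{α+1/2} for α = 1,…,N. Assume that at every point, for each α = 1,…,N, the mass equation ∂_t h_α + div(h_α u_α) = G_{α+1/2} − G_{α−1/2} and the momentum equation ρ ∂_t(h_α u_α) + ρ div(h_α u_α ⊗ u_α) + h_α ∇p_S + ρ g h_α ∇(z_b + h) = K_{α−1/2} − K_{α+1/2} + (ρ/2) G_{α+1/2}(u_{α+1} + u_α) − (ρ/2) G_{α−1/2}(u_α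 + u_{α−1}) hold. Then, with E_α := h_α(|u_α|²/2 + p_S/ρ + g(z_b + h/2)), at every point: ρ ∂_t(Σ_{α=1}^N E_α) + ρ div(Σ_{α=1}^N (E_α + g h_α h/2) u_α) ≤ h ∂_t(p_S + ρ g z_b) − μ ρ g h |u_1| − (η_{N+1/2}/h_N)|u_N|² − Σ_{α=1}^{N−1} (η_{α+1/2}/h_{α+1/2}) |u_{α+1} − u_α|² − G_{1/2}(p_S + ρ g (z_b + h)). -/

import Mathlib

/-- Partial derivative in time (first coordinate of `ℝ × ℝ × ℝ`). -/
noncomputable def pt (f : ℝ × ℝ × ℝ → ℝ) (p : ℝ × ℝ × ℝ) : ℝ := fderiv ℝ f p (1, 0, 0)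

/-- Partial derivative in the first spatial coordinate. -/
noncomputable def px (f : ℝ × ℝ × ℝ → ℝ) (p : ℝ × ℝ × ℝ) : ℝ := fderiv ℝ f p (0, 1, 0)

/-- Partial derivative in the second spatial coordinate. -/
noncomputable def py (f : ℝ × ℝ × ℝ → ℝ) (p : ℝ × ℝ × ℝ) : ℝ := fderiv ℝ f p (0, 0, 1)

/-- Spatial divergence of a planar vector field. -/
noncomputable def div2 (v : ℝ × ℝ × ℝ → ℝ × ℝ) (p : ℝ × ℝ × ℝ) : ℝ :=
  px (fun q => (v q).1) p + py (fun q => (v q).2) p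

/-- Spatial gradient of a scalar field. -/
noncomputable def grad2 (f : ℝ × ℝ × ℝ → ℝ) (p : ℝ × ℝ × ℝ) : ℝ × ℝ := (px f p, py f p)

/-- Componentwise time derivative of a planar vector field. -/
noncomputable def ptv (v : ℝ × ℝ × ℝ → ℝ × ℝ) (p : ℝ × ℝ × ℝ) : ℝ × ℝ :=
  (pt (fun q => (v q).1) p, pt (fun q => (v q).2) p)

/-- `div (h u ⊗ u)` : the vector whose i-th component is `div (h uᵢ u)`. -/
noncomputable def divOuter (h : ℝ × ℝ × ℝ → ℝ) (u : ℝ × ℝ × ℝ → ℝ × ℝ)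
    (p : ℝ × ℝ × ℝ) : ℝ × ℝ :=
  (div2 (fun q => (h q * (u q).1) • u q) p, div2 (fun q => (h q * (u q).2) • u q) p)

/-- Euclidean norm on `ℝ²`. -/
noncomputable def eunorm (a : ℝ × ℝ) : ℝ := Real.sqrt (a.1 ^ 2 + a.2 ^ 2)

section Helpers

variable {f g : ℝ × ℝ × ℝ → ℝ} {p v : ℝ × ℝ × ℝ}

theorem d_mul (hf : DifferentiableAt ℝ f p) (hg : DifferentiableAt ℝ g p) :
    fderiv ℝ (fun q => f q * g q) p v = f p * fderiv ℝ g p v + g p * fderiv ℝ f p v := by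
  rw [fderiv_fun_mul hf hg]; simp

theorem d_add (hf : DifferentiableAt ℝ f p) (hg : DifferentiableAt ℝ g p) :
    fderiv ℝ (fun q => f q + g q) p v = fderiv ℝ f p v + fderiv ℝ g p v := by
  rw [fderiv_fun_add hf hg]; simp

theorem d_const (c : ℝ) : fderiv ℝ (fun _ : ℝ × ℝ × ℝ => c) p v = 0 := by
  rw [fderiv_fun_const]; simp

theorem d_const_mul (c : ℝ) (hf : DifferentiableAt ℝ f p) :
    fderiv ℝ (fun q => c * f q) p v = c * fderiv ℝ f p v := by
  rw [fderiv_const_mul hf]; simp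

theorem d_div_const (c : ℝ) (hf : DifferentiableAt ℝ f p) :
    fderiv ℝ (fun q => f q / c) p v = fderiv ℝ f p v / c := by
  have h : (fun q => f q / c) = fun q => c⁻¹ * f q := by ext q; ring
  rw [h, d_const_mul _ hf]; ring

theorem d_sq (hf : DifferentiableAt ℝ f p) :
    fderiv ℝ (fun q => f q ^ 2) p v = 2 * f p * fderiv ℝ f p v := by
  have h : (fun q => f q ^ 2) = fun q => f q * f q := by ext q; ring
  rw [h, d_mul hf hf]; ring

theorem d_sum {s : Finset ℕ} {F : ℕ → ℝ × ℝ × ℝ → ℝ}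
    (hF : ∀ i ∈ s, DifferentiableAt ℝ (F i) p) :
    fderiv ℝ (fun q => ∑ i ∈ s, F i q) p v = ∑ i ∈ s, fderiv ℝ (F i) p v := by
  rw [fderiv_fun_sum hF]; simp

theorem eunorm_sq (a : ℝ × ℝ) : eunorm a ^ 2 = a.1 ^ 2 + a.2 ^ 2 :=
  Real.sq_sqrt (by positivity)

theorem eunorm_ne_zero {a : ℝ × ℝ} (h : a ≠ 0) : eunorm a ≠ 0 := by
  intro h0
  have h1 : a.1 ^ 2 + a.2 ^ 2 = 0 := by
    have := eunorm_sq a; rw [h0] at this; linarith [this]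
  have ha1 : a.1 = 0 := by nlinarith [sq_nonneg a.1, sq_nonneg a.2]
  have ha2 : a.2 = 0 := by nlinarith [sq_nonneg a.1, sq_nonneg a.2]
  exact h (Prod.ext ha1 ha2)

theorem telescope' (N : ℕ) (F : ℕ → ℝ) :
    ∑ α ∈ Finset.Icc 1 N, (F (α - 1) - F α) = F 0 - F N := by
  induction N with
  | zero => simp
  | succ n ih =>
    rw [Finset.sum_Icc_succ_top (Nat.le_add_left 1 n), ih]
    simp [Nat.succ_sub_one]

theorem telescope (N : ℕ) (F : ℕ → ℝ) :
    ∑ α ∈ Finset.Icc 1 N, (F α - F (α - 1)) = F N - F 0 := by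
  have h := telescope' N F
  have h2 : ∑ α ∈ Finset.Icc 1 N, (F α - F (α - 1))
      = -∑ α ∈ Finset.Icc 1 N, (F (α - 1) - F α) := by
    rw [← Finset.sum_neg_distrib]
    exact Finset.sum_congr rfl fun α _ => by ring
  rw [h2, h]; ring

theorem sum_helper (I : Finset ℕ) (X Y Z : ℕ → ℝ) (ρ : ℝ) :
    ρ * (∑ α ∈ I, X α) + ρ * ((∑ α ∈ I, Y α) + (∑ α ∈ I, Z α))
      = ∑ α ∈ I, (ρ * X α + ρ * (Y α + Z α)) := by
  rw [mul_add, Finset.mul_sum, Finset.mul_sum, Finset.mul_sum, ← Finset.sum_add_distrib,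
    ← Finset.sum_add_distrib]
  exact Finset.sum_congr rfl fun α _ => by ring

end Helpers

noncomputable def dotp (x y : ℝ × ℝ) : ℝ := x.1 * y.1 + x.2 * y.2

noncomputable def T1aux (u K : ℕ → ℝ × ℝ × ℝ → ℝ × ℝ) (p : ℝ × ℝ × ℝ) (β : ℕ) : ℝ :=
  dotp (u (β + 1) p) (K β p)

noncomputable def T2aux (ρ : ℝ) (G : ℕ → ℝ × ℝ × ℝ → ℝ) (u : ℕ → ℝ × ℝ × ℝ → ℝ × ℝ)
    (p : ℝ × ℝ × ℝ) (β : ℕ) : ℝ := ρ / 2 * G β p * dotp (u β p) (u (β + 1) p)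

noncomputable def T3aux (c : ℝ) (G : ℕ → ℝ × ℝ × ℝ → ℝ) (p : ℝ × ℝ × ℝ) (β : ℕ) : ℝ :=
  c * G β p

noncomputable def DDaux (u K : ℕ → ℝ × ℝ × ℝ → ℝ × ℝ) (p : ℝ × ℝ × ℝ) (β : ℕ) : ℝ :=
  dotp (u (β + 1) p - u β p) (K β p)

theorem local_energy (ρ g : ℝ)
    (a S Z H : ℝ × ℝ × ℝ → ℝ) (w : ℝ × ℝ × ℝ → ℝ × ℝ)
    (ha : Differentiable ℝ a) (hS : Differentiable ℝ S) (hZ : Differentiable ℝ Z)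
    (hH : Differentiable ℝ H) (hw : Differentiable ℝ w)
    (Gp Gm : ℝ) (Kp Km up um : ℝ × ℝ) (p e0 e1 e2 : ℝ × ℝ × ℝ)
    (mass : fderiv ℝ a p e0 + (fderiv ℝ (fun q => a q * (w q).1) p e1
        + fderiv ℝ (fun q => a q * (w q).2) p e2) = Gp - Gm)
    (mom1 : ρ * fderiv ℝ (fun q => a q * (w q).1) p e0
        + ρ * (fderiv ℝ (fun q => a q * (w q).1 * (w q).1) p e1
             + fderiv ℝ (fun q => a q * (w q).1 * (w q).2) p e2)
        + a p * (ρ * fderiv ℝ S p e1)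
        + ρ * g * a p * (fderiv ℝ Z p e1 + fderiv ℝ H p e1)
      = Km.1 - Kp.1 + ρ/2*Gp*(up.1 + (w p).1) - ρ/2*Gm*((w p).1 + um.1))
    (mom2 : ρ * fderiv ℝ (fun q => a q * (w q).2) p e0
        + ρ * (fderiv ℝ (fun q => a q * (w q).2 * (w q).1) p e1
             + fderiv ℝ (fun q => a q * (w q).2 * (w q).2) p e2)
        + a p * (ρ * fderiv ℝ S p e2)
        + ρ * g * a p * (fderiv ℝ Z p e2 + fderiv ℝ H p e2)
      = Km.2 - Kp.2 + ρ/2*Gp*(up.2 + (w p).2) - ρ/2*Gm*((w p).2 + um.2)) :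
    ρ * fderiv ℝ (fun q => a q * (((w q).1^2 + (w q).2^2)/2 + S q + g*(Z q + H q/2))) p e0
      + ρ * (fderiv ℝ (fun q =>
            (a q * (((w q).1^2 + (w q).2^2)/2 + S q + g*(Z q + H q/2)) + g * a q * H q / 2)
              * (w q).1) p e1
           + fderiv ℝ (fun q =>
            (a q * (((w q).1^2 + (w q).2^2)/2 + S q + g*(Z q + H q/2)) + g * a q * H q / 2)
              * (w q).2) p e2)
    = ((w p).1 * Km.1 + (w p).2 * Km.2 - ((w p).1 * Kp.1 + (w p).2 * Kp.2))
      + (ρ/2 * Gp * ((w p).1*up.1 + (w p).2*up.2 + ((w p).1^2 + (w p).2^2))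
         - ρ/2 * Gm * (((w p).1^2 + (w p).2^2) + (w p).1*um.1 + (w p).2*um.2))
      + (ρ * S p + ρ*g*(Z p + H p)) * (Gp - Gm)
      - ρ*((w p).1^2 + (w p).2^2)/2 * (Gp - Gm)
      + (a p * (ρ * fderiv ℝ S p e0 + ρ*g*fderiv ℝ Z p e0)
      + ρ*g/2*(a p * fderiv ℝ H p e0 - H p * fderiv ℝ a p e0)) := by
  simp (disch := fun_prop) only [d_mul, d_add, d_div_const, d_sq, d_const_mul, d_const]
    at mass mom1 mom2 ⊢
  linear_combination (w p).1 * mom1 + (w p).2 * mom2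
    + (ρ * S p + ρ*g*(Z p + H p) - ρ*((w p).1^2 + (w p).2^2)/2) * mass

/-- Dissipative energy inequality for the multilayer shallow model. -/
theorem multilayer_energy_inequality
    (N : ℕ) (hN : 1 ≤ N) (ρ g : ℝ) (hρ : 0 < ρ) (hg : 0 < g)
    (hl : ℕ → ℝ × ℝ × ℝ → ℝ) (u : ℕ → ℝ × ℝ × ℝ → ℝ × ℝ)
    (pS zb : ℝ × ℝ × ℝ → ℝ) (G : ℕ → ℝ × ℝ × ℝ → ℝ)
    (η : ℕ → ℝ × ℝ × ℝ → ℝ) (μ : ℝ × ℝ × ℝ → ℝ)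
    (hmid : ℕ → ℝ × ℝ × ℝ → ℝ)
    (K : ℕ → ℝ × ℝ × ℝ → ℝ × ℝ)
    (htot : ℝ × ℝ × ℝ → ℝ) (E : ℕ → ℝ × ℝ × ℝ → ℝ)
    -- regularity assumptions
    (hl_smooth : ∀ α ∈ Finset.Icc 1 N, ContDiff ℝ 1 (hl α))
    (u_smooth : ∀ α ∈ Finset.Icc 1 N, ContDiff ℝ 1 (u α))
    (pS_smooth : ContDiff ℝ 1 pS) (zb_smooth : ContDiff ℝ 1 zb)
    (G_smooth : ∀ α ∈ Finset.Icc 0 N, ContDiff ℝ 1 (G α))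
    (η_smooth : ∀ α ∈ Finset.Icc 1 N, ContDiff ℝ 1 (η α))
    (μ_smooth : ContDiff ℝ 1 μ)
    (hmid_smooth : ∀ α ∈ Finset.Icc 1 (N - 1), ContDiff ℝ 1 (hmid α))
    -- sign assumptions
    (hl_pos : ∀ α ∈ Finset.Icc 1 N, ∀ p, 0 < hl α p)
    (η_nonneg : ∀ α ∈ Finset.Icc 1 N, ∀ p, 0 ≤ η α p)
    (μ_nonneg : ∀ p, 0 ≤ μ p)
    (hmid_pos : ∀ α ∈ Finset.Icc 1 (N - 1), ∀ p, 0 < hmid α p)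
    -- conventions and definitions
    (htot_def : ∀ p, htot p = ∑ α ∈ Finset.Icc 1 N, hl α p)
    (u_bot : ∀ p, u 0 p = 0) (u_top : ∀ p, u (N + 1) p = 0)
    (hmid_top : ∀ p, hmid N p = hl N p)
    (G_top : ∀ p, G N p = 0)
    (u1_ne : ∀ p, u 1 p ≠ 0)
    (K_bot : ∀ p, K 0 p = (-(μ p * ρ * g * htot p) / eunorm (u 1 p)) • u 1 p)
    (K_def : ∀ α ∈ Finset.Icc 1 N, ∀ p,
      K α p = (-(η α p / hmid α p)) • (u (α + 1) p - u α p))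
    (E_def : ∀ α, ∀ p, E α p =
      hl α p * ((eunorm (u α p)) ^ 2 / 2 + pS p / ρ + g * (zb p + htot p / 2)))
    -- governing equations
    (mass_eq : ∀ α ∈ Finset.Icc 1 N, ∀ p,
      pt (hl α) p + div2 (fun q => hl α q • u α q) p = G α p - G (α - 1) p)
    (mom_eq : ∀ α ∈ Finset.Icc 1 N, ∀ p,
      ρ • ptv (fun q => hl α q • u α q) p + ρ • divOuter (hl α) (u α) p
        + hl α p • grad2 pS p + (ρ * g * hl α p) • grad2 (fun q => zb q + htot q) p
      = K (α - 1) p - K α p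
        + (ρ / 2 * G α p) • (u (α + 1) p + u α p)
        - (ρ / 2 * G (α - 1) p) • (u α p + u (α - 1) p)) :
    ∀ p,
      ρ * pt (fun q => ∑ α ∈ Finset.Icc 1 N, E α q) p
        + ρ * div2 (fun q =>
            ∑ α ∈ Finset.Icc 1 N, (E α q + g * hl α q * htot q / 2) • u α q) p
      ≤ htot p * pt (fun q => pS q + ρ * g * zb q) p
        - μ p * ρ * g * htot p * eunorm (u 1 p)
        - η N p / hl N p * (eunorm (u N p)) ^ 2
        - (∑ α ∈ Finset.Icc 1 (N - 1),
            η α p / hmid α p * (eunorm (u (α + 1) p - u α p)) ^ 2)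
        - G 0 p * (pS p + ρ * g * (zb p + htot p)) := by
  intro p
  have hρ' : ρ ≠ 0 := ne_of_gt hρ
  set S : ℝ × ℝ × ℝ → ℝ := fun q => pS q / ρ with hSdef
  have hS : Differentiable ℝ S := by
    have hp := pS_smooth.differentiable one_ne_zero
    rw [hSdef]; fun_prop
  have hpS_eq : pS = fun q => ρ * S q := by
    funext q; rw [hSdef]; field_simp
  have hZ : Differentiable ℝ zb := zb_smooth.differentiable one_ne_zero
  have htot_fun : htot = fun q => ∑ α ∈ Finset.Icc 1 N, hl α q := funext htot_def
  have hH : Differentiable ℝ htot := by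
    rw [htot_fun]
    exact Differentiable.fun_sum fun i hi => (hl_smooth i hi).differentiable one_ne_zero
  have hEval : ∀ α ∈ Finset.Icc 1 N, ∀ q, E α q
      = hl α q * (((u α q).1^2 + (u α q).2^2)/2 + S q + g*(zb q + htot q/2)) := by
    intro α hα q
    have h1 : eunorm (u α q) ^ 2 = (u α q).1 ^ 2 + (u α q).2 ^ 2 := eunorm_sq (u α q)
    rw [E_def α q, h1]
  -- the per-layer energy identity
  have key : ∀ α ∈ Finset.Icc 1 N,
      ρ * fderiv ℝ (fun q =>
          hl α q * (((u α q).1^2 + (u α q).2^2)/2 + S q + g*(zb q + htot q/2))) p (1,0,0)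
        + ρ * (fderiv ℝ (fun q =>
              (hl α q * (((u α q).1^2 + (u α q).2^2)/2 + S q + g*(zb q + htot q/2))
                + g * hl α q * htot q / 2) * (u α q).1) p (0,1,0)
             + fderiv ℝ (fun q =>
              (hl α q * (((u α q).1^2 + (u α q).2^2)/2 + S q + g*(zb q + htot q/2))
                + g * hl α q * htot q / 2) * (u α q).2) p (0,0,1))
      = (T1aux u K p (α-1) - T1aux u K p α)
        + (T2aux ρ G u p α - T2aux ρ G u p (α-1))
        + (T3aux (ρ * S p + ρ*g*(zb p + htot p)) G p α
            - T3aux (ρ * S p + ρ*g*(zb p + htot p)) G p (α-1))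
        + DDaux u K p α
        + hl α p * (ρ * fderiv ℝ S p (1,0,0) + ρ*g*fderiv ℝ zb p (1,0,0))
        + ρ*g/2*(hl α p * fderiv ℝ htot p (1,0,0)
            - htot p * fderiv ℝ (hl α) p (1,0,0)) := by
    intro α hα
    have ha : Differentiable ℝ (hl α) := (hl_smooth α hα).differentiable one_ne_zero
    have hu : Differentiable ℝ (u α) := (u_smooth α hα).differentiable one_ne_zero
    have mass := mass_eq α hα p
    simp only [div2, px, py, pt, Prod.smul_fst, Prod.smul_snd, smul_eq_mul] at mass
    have mom := mom_eq α hα p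
    rw [hpS_eq] at mom
    have mom1 := congrArg Prod.fst mom
    have mom2 := congrArg Prod.snd mom
    simp only [ptv, divOuter, div2, grad2, pt, px, py, Prod.fst_add, Prod.snd_add,
      Prod.fst_sub, Prod.snd_sub, Prod.smul_fst, Prod.smul_snd, smul_eq_mul] at mom1 mom2
    rw [d_const_mul ρ (hS.differentiableAt), d_add hZ.differentiableAt hH.differentiableAt]
      at mom1 mom2
    have lem := local_energy ρ g (hl α) S zb htot (u α) ha hS hZ hH hu
      (G α p) (G (α-1) p) (K α p) (K (α-1) p) (u (α+1) p) (u (α-1) p)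
      p (1,0,0) (0,1,0) (0,0,1) mass mom1 mom2
    rw [lem]
    have h1α : 1 ≤ α := (Finset.mem_Icc.mp hα).1
    have h : α - 1 + 1 = α := by omega
    simp only [T1aux, T2aux, T3aux, DDaux, dotp, Prod.fst_sub, Prod.snd_sub, h]
    ring
  -- expand the goal
  have hN1 : N - 1 + 1 = N := by omega
  simp only [pt, px, py, div2]
  have h1 : (fun q => ∑ α ∈ Finset.Icc 1 N, E α q)
      = fun q => ∑ α ∈ Finset.Icc 1 N,
          hl α q * (((u α q).1^2 + (u α q).2^2)/2 + S q + g*(zb q + htot q/2)) := by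
    funext q; exact Finset.sum_congr rfl fun α hα => hEval α hα q
  have hflux1 : (fun q =>
        (∑ α ∈ Finset.Icc 1 N, (E α q + g * hl α q * htot q / 2) • u α q).1)
      = fun q => ∑ α ∈ Finset.Icc 1 N,
          (hl α q * (((u α q).1^2 + (u α q).2^2)/2 + S q + g*(zb q + htot q/2))
            + g * hl α q * htot q / 2) * (u α q).1 := by
    funext q
    rw [Prod.fst_sum]
    exact Finset.sum_congr rfl fun α hα => by
      rw [Prod.smul_fst, smul_eq_mul, hEval α hα q]
  have hflux2 : (fun q =>
        (∑ α ∈ Finset.Icc 1 N, (E α q + g * hl α q * htot q / 2) • u α q).2)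
      = fun q => ∑ α ∈ Finset.Icc 1 N,
          (hl α q * (((u α q).1^2 + (u α q).2^2)/2 + S q + g*(zb q + htot q/2))
            + g * hl α q * htot q / 2) * (u α q).2 := by
    funext q
    rw [Prod.snd_sum]
    exact Finset.sum_congr rfl fun α hα => by
      rw [Prod.smul_snd, smul_eq_mul, hEval α hα q]
  rw [h1, hflux1, hflux2]
  have hdiffE : ∀ i ∈ Finset.Icc 1 N, DifferentiableAt ℝ
      (fun q => hl i q * (((u i q).1^2 + (u i q).2^2)/2 + S q + g*(zb q + htot q/2))) p := by
    intro i hi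
    have hd1 := (hl_smooth i hi).differentiable one_ne_zero
    have hd2 := (u_smooth i hi).differentiable one_ne_zero
    fun_prop
  have hdiffF1 : ∀ i ∈ Finset.Icc 1 N, DifferentiableAt ℝ
      (fun q => (hl i q * (((u i q).1^2 + (u i q).2^2)/2 + S q + g*(zb q + htot q/2))
        + g * hl i q * htot q / 2) * (u i q).1) p := by
    intro i hi
    have hd1 := (hl_smooth i hi).differentiable one_ne_zero
    have hd2 := (u_smooth i hi).differentiable one_ne_zero
    fun_prop
  have hdiffF2 : ∀ i ∈ Finset.Icc 1 N, DifferentiableAt ℝ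
      (fun q => (hl i q * (((u i q).1^2 + (u i q).2^2)/2 + S q + g*(zb q + htot q/2))
        + g * hl i q * htot q / 2) * (u i q).2) p := by
    intro i hi
    have hd1 := (hl_smooth i hi).differentiable one_ne_zero
    have hd2 := (u_smooth i hi).differentiable one_ne_zero
    fun_prop
  have hs0 : fderiv ℝ (fun q => ∑ α ∈ Finset.Icc 1 N,
        hl α q * (((u α q).1^2 + (u α q).2^2)/2 + S q + g*(zb q + htot q/2))) p (1,0,0)
      = ∑ α ∈ Finset.Icc 1 N, fderiv ℝ
        (fun q => hl α q * (((u α q).1^2 + (u α q).2^2)/2 + S q + g*(zb q + htot q/2)))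
        p (1,0,0) := d_sum hdiffE
  have hs1 : fderiv ℝ (fun q => ∑ α ∈ Finset.Icc 1 N,
        (hl α q * (((u α q).1^2 + (u α q).2^2)/2 + S q + g*(zb q + htot q/2))
          + g * hl α q * htot q / 2) * (u α q).1) p (0,1,0)
      = ∑ α ∈ Finset.Icc 1 N, fderiv ℝ
        (fun q => (hl α q * (((u α q).1^2 + (u α q).2^2)/2 + S q + g*(zb q + htot q/2))
          + g * hl α q * htot q / 2) * (u α q).1) p (0,1,0) := d_sum hdiffF1
  have hs2 : fderiv ℝ (fun q => ∑ α ∈ Finset.Icc 1 N,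
        (hl α q * (((u α q).1^2 + (u α q).2^2)/2 + S q + g*(zb q + htot q/2))
          + g * hl α q * htot q / 2) * (u α q).2) p (0,0,1)
      = ∑ α ∈ Finset.Icc 1 N, fderiv ℝ
        (fun q => (hl α q * (((u α q).1^2 + (u α q).2^2)/2 + S q + g*(zb q + htot q/2))
          + g * hl α q * htot q / 2) * (u α q).2) p (0,0,1) := d_sum hdiffF2
  rw [hs0, hs1, hs2, sum_helper, Finset.sum_congr rfl key]
  -- telescoping and evaluation
  have hdH : fderiv ℝ htot p (1,0,0)
      = ∑ α ∈ Finset.Icc 1 N, fderiv ℝ (hl α) p (1,0,0) := by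
    conv_lhs => rw [htot_fun]
    exact d_sum fun i hi => ((hl_smooth i hi).differentiable one_ne_zero).differentiableAt
  have hT1N : T1aux u K p N = 0 := by simp [T1aux, dotp, u_top p]
  have hT10 : T1aux u K p 0 = -(μ p * ρ * g * htot p * eunorm (u 1 p)) := by
    have he : eunorm (u 1 p) ≠ 0 := eunorm_ne_zero (u1_ne p)
    have hsq := eunorm_sq (u 1 p)
    simp only [T1aux, dotp, zero_add, K_bot p, Prod.smul_fst, Prod.smul_snd, smul_eq_mul]
    have hstep : (u 1 p).1 * (-(μ p * ρ * g * htot p) / eunorm (u 1 p) * (u 1 p).1)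
        + (u 1 p).2 * (-(μ p * ρ * g * htot p) / eunorm (u 1 p) * (u 1 p).2)
        = -(μ p * ρ * g * htot p) / eunorm (u 1 p) * (eunorm (u 1 p) ^ 2) := by
      rw [hsq]; ring
    rw [hstep]
    field_simp
  have hT2N : T2aux ρ G u p N = 0 := by simp [T2aux, G_top p]
  have hT20 : T2aux ρ G u p 0 = 0 := by simp [T2aux, dotp, u_bot p]
  have hT3N : T3aux (ρ * S p + ρ*g*(zb p + htot p)) G p N = 0 := by simp [T3aux, G_top p]
  have hT30 : T3aux (ρ * S p + ρ*g*(zb p + htot p)) G p 0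
      = (ρ * S p + ρ*g*(zb p + htot p)) * G 0 p := rfl
  have hDDsum : ∑ α ∈ Finset.Icc 1 N, DDaux u K p α
      = -(∑ α ∈ Finset.Icc 1 (N-1),
            η α p / hmid α p * eunorm (u (α+1) p - u α p)^2)
        - η N p / hl N p * eunorm (u N p)^2 := by
    have hsplit : ∑ α ∈ Finset.Icc 1 N, DDaux u K p α
        = (∑ α ∈ Finset.Icc 1 (N-1), DDaux u K p α) + DDaux u K p N := by
      conv_lhs => rw [← hN1]
      rw [Finset.sum_Icc_succ_top (by omega : 1 ≤ N - 1 + 1), hN1]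
    have hDN : DDaux u K p N = -(η N p / hl N p * eunorm (u N p)^2) := by
      rw [DDaux, K_def N (Finset.mem_Icc.mpr ⟨hN, le_refl N⟩) p, u_top p, hmid_top p]
      simp only [dotp, Prod.fst_sub, Prod.snd_sub, Prod.smul_fst, Prod.smul_snd,
        smul_eq_mul, Prod.fst_zero, Prod.snd_zero]
      rw [eunorm_sq]
      ring
    have hDmid : ∀ α ∈ Finset.Icc 1 (N-1), DDaux u K p α
        = -(η α p / hmid α p * eunorm (u (α+1) p - u α p)^2) := by
      intro α hα
      have hmem : α ∈ Finset.Icc 1 N := by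
        rw [Finset.mem_Icc] at *; omega
      rw [DDaux, K_def α hmem p]
      simp only [dotp, Prod.fst_sub, Prod.snd_sub, Prod.smul_fst, Prod.smul_snd, smul_eq_mul]
      rw [eunorm_sq]
      simp only [Prod.fst_sub, Prod.snd_sub]
      ring
    rw [hsplit, Finset.sum_congr rfl hDmid, hDN, ← Finset.sum_neg_distrib]
    rw [Finset.sum_neg_distrib]
    ring
  have hdPS : fderiv ℝ (fun q => pS q + ρ * g * zb q) p (1,0,0)
      = ρ * fderiv ℝ S p (1,0,0) + ρ * g * fderiv ℝ zb p (1,0,0) := by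
    simp only [hpS_eq]
    rw [d_add (by fun_prop) (by fun_prop), d_const_mul ρ hS.differentiableAt,
      d_const_mul (ρ * g) hZ.differentiableAt]
  have hpSp : pS p = ρ * S p := by rw [hSdef]; field_simp
  rw [Finset.sum_add_distrib, Finset.sum_add_distrib, Finset.sum_add_distrib,
    Finset.sum_add_distrib, Finset.sum_add_distrib,
    telescope' N (T1aux u K p), telescope N (T2aux ρ G u p),
    telescope N (T3aux (ρ * S p + ρ*g*(zb p + htot p)) G p),
    ← Finset.sum_mul, ← Finset.mul_sum, Finset.sum_sub_distrib, ← Finset.sum_mul,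
    ← Finset.mul_sum, ← htot_def p, ← hdH,
    hT10, hT1N, hT2N, hT20, hT3N, hT30, hDDsum, hdPS, hpSp]
  apply le_of_eq
  ring
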